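/- If a man m performs a no-regret push-up manipulation on profile ≻ yielding profile ≻', then with respect to the original preferences, every woman weakly prefers DA(≻') to DA(≻), and every man weakly prefers DA(≻) to DA(≻'). -/

import Mathlib

open Classical

/-- A strict preference list over `Fin n`, encoded as a permutation whose inverse
gives the rank of each alternative (lower rank = more preferred). -/
abbrev Pref (n : ℕ) := Equiv.Perm (Fin n)

/-- A profile of preference lists, one for each of the `n` agents on one side. -/
abbrev Profile (n : ℕ) := Fin n → Pref n

/-- `a` is strictly preferred to `b` under the list `p`. -/
def SPref {n : ℕ} (p : Pref n) (a b : Fin n) : Prop := p.symm a < p.symm b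

/-- `a` is weakly preferred to `b` under the list `p`. -/
def WPref {n : ℕ} (p : Pref n) (a b : Fin n) : Prop := p.symm a ≤ p.symm b

/-- A matching: a bijection from men to women. -/
abbrev Matching (n : ℕ) := Fin n ≃ Fin n

/-- `(m, w)` is a blocking pair of `μ` w.r.t. men's profile `mp` and women's profile `wp`. -/
def Blocks {n : ℕ} (mp wp : Profile n) (μ : Matching n) (m w : Fin n) : Prop :=
  SPref (mp m) w (μ m) ∧ SPref (wp w) m (μ.symm w)

/-- A matching is stable if it admits no blocking pair. -/
def IsStable {n : ℕ} (mp wp : Profile n) (μ : Matching n) : Prop :=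
  ∀ m w, ¬ Blocks mp wp μ m w

instance {n : ℕ} : Nonempty (Matching n) := ⟨Equiv.refl _⟩

/-- The outcome of the men-proposing Deferred Acceptance algorithm, specified as
the (unique) man-optimal stable matching of the instance `⟨mp, wp⟩`. -/
noncomputable def DA {n : ℕ} (mp wp : Profile n) : Matching n :=
  Classical.epsilon fun μ => IsStable mp wp μ ∧
    ∀ μ' : Matching n, IsStable mp wp μ' → ∀ m, WPref (mp m) (μ m) (μ' m)

/-- An accomplice manipulation at strategy profile `p` (men's reports; women truthful
with profile `wp`) by the pair `(m, w)`, via misreport `q` of man `m`: woman `w`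
strictly benefits and man `m` is not worse off, w.r.t. the true profiles `mp`, `wp`. -/
def AccManip {n : ℕ} (mp wp : Profile n) (p : Profile n) (m w : Fin n) (q : Pref n) : Prop :=
  SPref (wp w) ((DA (Function.update p m q) wp).symm w) ((DA p wp).symm w) ∧
  WPref (mp m) (DA (Function.update p m q) wp m) (DA p wp m)

/-- `p` is a Nash equilibrium of the accomplice manipulation game with strategic pairs `P`. -/
def IsNE {n : ℕ} (mp wp : Profile n) (P : Set (Fin n × Fin n)) (p : Profile n) : Prop :=
  ∀ m w, (m, w) ∈ P → ¬ ∃ q, AccManip mp wp p m w q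

/-- `q` results from the list `cur` by a push-up of the set `X` above `star`
(= the current DA partner): the set of women ranked above `star` in `q` is exactly
the set of those ranked above `star` in `cur` together with `X`. -/
def IsPushUp {n : ℕ} (cur : Pref n) (star : Fin n) (X : Set (Fin n)) (q : Pref n) : Prop :=
  ∀ w, SPref q w star ↔ (SPref cur w star ∨ w ∈ X)

/-- One step of the push-up dynamic: some strategic pair `(m, w) ∈ P` performs a
no-regret push-up accomplice manipulation at profile `p`, yielding `p'`. -/
def PushUpStep {n : ℕ} (mp wp : Profile n) (P : Set (Fin n × Fin n))
    (p p' : Profile n) : Prop :=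
  ∃ m w, (m, w) ∈ P ∧ ∃ X q,
    X ⊆ {w' | SPref (p m) (DA p wp m) w'} ∧
    IsPushUp (p m) (DA p wp m) X q ∧
    p' = Function.update p m q ∧
    SPref (wp w) ((DA p' wp).symm w) ((DA p wp).symm w) ∧
    WPref (mp m) (DA p' wp m) (DA p wp m)

/-- A push-up dynamic: starts at the truthful profile, and at each step performs a
no-regret push-up accomplice manipulation by some strategic pair if one exists,
otherwise stays put. -/
def IsPushUpDynamic {n : ℕ} (mp wp : Profile n) (P : Set (Fin n × Fin n))
    (p : ℕ → Profile n) : Prop :=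
  p 0 = mp ∧ ∀ t,
    PushUpStep mp wp P (p t) (p (t + 1)) ∨
    (p (t + 1) = p t ∧ ¬ ∃ p', PushUpStep mp wp P (p t) p')

/-- A one-for-many manipulation at profile `p` by man `m` for beneficiary set `B`,
via misreport `q`: every woman in `B` weakly benefits, some woman in `B` strictly
benefits, and `m` is not worse off (true preferences). -/
def OFMManip {n : ℕ} (mp wp : Profile n) (p : Profile n) (m : Fin n)
    (B : Set (Fin n)) (q : Pref n) : Prop :=
  (∀ w ∈ B, WPref (wp w) ((DA (Function.update p m q) wp).symm w) ((DA p wp).symm w)) ∧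
  (∃ w ∈ B, SPref (wp w) ((DA (Function.update p m q) wp).symm w) ((DA p wp).symm w)) ∧
  WPref (mp m) (DA (Function.update p m q) wp m) (DA p wp m)

/-- Nash equilibrium of the one-for-many manipulation game with strategic men `Pm`
and beneficiary sets `B`. -/
def IsNEOFM {n : ℕ} (mp wp : Profile n) (Pm : Set (Fin n)) (B : Fin n → Set (Fin n))
    (p : Profile n) : Prop :=
  ∀ m ∈ Pm, ¬ ∃ q, OFMManip mp wp p m (B m) q

/-- `q` is obtained from `cur` by promoting (weakly moving up) exactly one man `a`,
leaving the relative order of all other men unchanged. -/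
def Inconspicuous {n : ℕ} (cur q : Pref n) : Prop :=
  ∃ a, (∀ x y, x ≠ a → y ≠ a → (SPref q x y ↔ SPref cur x y)) ∧
    (∀ x, SPref cur a x → SPref q a x)

/-- One step of the inconspicuous dynamic for the woman self-manipulation game:
some strategic woman `w ∈ Pw` performs an optimal inconspicuous self-manipulation
in the current instance `⟨mp, pw⟩`. -/
def InconspicuousStep {n : ℕ} (mp : Profile n) (Pw : Set (Fin n))
    (pw pw' : Profile n) : Prop :=
  ∃ w ∈ Pw, ∃ q,
    pw' = Function.update pw w q ∧
    Inconspicuous (pw w) q ∧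
    SPref (pw w) ((DA mp pw').symm w) ((DA mp pw).symm w) ∧
    ∀ q', WPref (pw w) ((DA mp pw').symm w) ((DA mp (Function.update pw w q')).symm w)

/-- The inconspicuous dynamic of the woman self-manipulation game: starts at the
truthful profile `wp`, and at each step performs an optimal inconspicuous
self-manipulation by some strategic woman if one exists, otherwise stays put. -/
def IsInconspicuousDynamic {n : ℕ} (mp wp : Profile n) (Pw : Set (Fin n))
    (pw : ℕ → Profile n) : Prop :=
  pw 0 = wp ∧ ∀ t,
    InconspicuousStep mp Pw (pw t) (pw (t + 1)) ∨
    (pw (t + 1) = pw t ∧ ¬ ∃ pw', InconspicuousStep mp Pw (pw t) pw')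

namespace PushUpAux

variable {n : ℕ}

lemma spref_irrefl (p : Pref n) (a : Fin n) : ¬ SPref p a a := lt_irrefl _

lemma spref_trans {p : Pref n} {a b c : Fin n} (h1 : SPref p a b) (h2 : SPref p b c) :
    SPref p a c := lt_trans h1 h2

lemma spref_asymm {p : Pref n} {a b : Fin n} (h1 : SPref p a b) : ¬ SPref p b a := lt_asymm h1

lemma spref_of_ne_of_not {p : Pref n} {a b : Fin n} (hne : a ≠ b) (h : ¬ SPref p b a) :
    SPref p a b := by
  rcases lt_trichotomy (p.symm a) (p.symm b) with h'|h'|h'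
  · exact h'
  · exact absurd (p.symm.injective h') hne
  · exact absurd h' h

lemma wpref_of_not_spref {p : Pref n} {a b : Fin n} (h : ¬ SPref p b a) : WPref p a b :=
  le_of_not_gt h

lemma spref_ne {p : Pref n} {a b : Fin n} (h : SPref p a b) : a ≠ b := by
  rintro rfl; exact lt_irrefl _ h

lemma eq_of_wpref_wpref {p : Pref n} {a b : Fin n} (h1 : WPref p a b) (h2 : WPref p b a) :
    a = b := p.symm.injective (le_antisymm h1 h2)

section GS

variable (mp wp : Profile n) (hn : 0 < n)

/-- The tentative partner of man `a` when the pointer state is `σ`. -/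
def fav (σ : Fin n → Fin n) (a : Fin n) : Fin n := mp a (σ a)

/-- One rejection step of Gale–Shapley: men `a ≠ b` both point at the same woman,
who prefers `a`; then `b` advances his pointer. -/
def GStep (σ σ' : Fin n → Fin n) : Prop :=
  ∃ a b, ∃ h : ((σ b : ℕ) + 1) < n, a ≠ b ∧ fav mp σ a = fav mp σ b ∧
    SPref (wp (fav mp σ b)) a b ∧ σ' = Function.update σ b ⟨(σ b : ℕ) + 1, h⟩

/-- Invariant: every woman a man has been rejected by currently has a pointer she prefers. -/
def InvI (σ : Fin n → Fin n) : Prop :=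
  ∀ a (k : Fin n), k < σ a → ∃ c, fav mp σ c = mp a k ∧ SPref (wp (mp a k)) c a

/-- Invariant: no man's pointer ever passes his partner in any stable matching. -/
def InvM (σ : Fin n → Fin n) : Prop :=
  ∀ ν : Matching n, IsStable mp wp ν → ∀ a, (σ a : ℕ) ≤ ((mp a).symm (ν a) : ℕ)

/-- The Gale–Shapley run. -/
noncomputable def run : ℕ → (Fin n → Fin n)
  | 0 => fun _ => ⟨0, hn⟩
  | (t+1) =>
    if h : ∃ σ', GStep mp wp (run t) σ' then h.choose else run t

lemma run_succ_cases (t : ℕ) :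
    run mp wp hn (t+1) = run mp wp hn t ∨ GStep mp wp (run mp wp hn t) (run mp wp hn (t+1)) := by
  rw [run]
  split
  · next h => exact Or.inr h.choose_spec
  · exact Or.inl rfl

lemma invI_init : InvI mp wp (run mp wp hn 0) := by
  intro a k hk
  exact absurd hk (by simp [run, Fin.lt_def])

lemma invI_step {σ σ' : Fin n → Fin n} (hI : InvI mp wp σ) (hs : GStep mp wp σ σ') :
    InvI mp wp σ' := by
  obtain ⟨a, b, h, hab, hfav, hpref, rfl⟩ := hs
  have hupd_ne : ∀ c : Fin n, c ≠ b → fav mp (Function.update σ b ⟨(σ b : ℕ) + 1, h⟩) c = fav mp σ c := by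
    intro c hc; simp [fav, Function.update_of_ne hc]
  intro x k hk
  by_cases hxb : x = b
  · subst hxb
    have hk2 := hk
    rw [Function.update_self] at hk2
    have hk' : (k : ℕ) < (σ x : ℕ) + 1 := hk2
    rcases Nat.lt_succ_iff_lt_or_eq.mp hk' with hlt | heq
    · obtain ⟨c, hc1, hc2⟩ := hI x k hlt
      have hcb : c ≠ x := by
        intro hcx; subst hcx
        have heq : σ c = k := (mp c).injective hc1
        rw [heq] at hlt
        exact lt_irrefl _ hlt
      refine ⟨c, ?_, hc2⟩
      rw [hupd_ne c hcb]; exact hc1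
    · have hkeq : k = σ x := Fin.ext heq
      have hw : mp x k = fav mp σ x := by rw [hkeq]; rfl
      refine ⟨a, ?_, ?_⟩
      · rw [hupd_ne a hab, hfav, hw]
      · rw [hw]; exact hpref
  · have hk' : k < σ x := by simpa [Function.update_of_ne hxb] using hk
    obtain ⟨c, hc1, hc2⟩ := hI x k hk'
    by_cases hcb : c = b
    · refine ⟨a, ?_, ?_⟩
      · rw [hupd_ne a hab, hfav, ← hcb]; exact hc1
      · have hw : fav mp σ b = mp x k := by rw [← hcb]; exact hc1
        have h1 : SPref (wp (mp x k)) a b := by rw [← hw]; exact hpref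
        have h2 : SPref (wp (mp x k)) b x := by rw [← hcb]; exact hc2
        exact spref_trans h1 h2
    · exact ⟨c, by rw [hupd_ne c hcb]; exact hc1, hc2⟩

lemma invM_step {σ σ' : Fin n → Fin n} (hM : InvM mp wp σ) (hs : GStep mp wp σ σ') :
    InvM mp wp σ' := by
  obtain ⟨a, b, h, hab, hfav, hpref, rfl⟩ := hs
  intro ν hν x
  by_cases hxb : x = b
  · subst hxb
    have hM' := hM ν hν x
    rcases lt_or_eq_of_le hM' with hlt | heq
    · simpa [Function.update_self] using hlt
    · exfalso
      have hνx : ν x = mp x (σ x) := by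
        have : (mp x).symm (ν x) = σ x := Fin.ext heq.symm
        rw [← this, Equiv.apply_symm_apply]
      refine hν a (fav mp σ x) ⟨?_, ?_⟩
      · show SPref (mp a) (fav mp σ x) (ν a)
        have h1 : (mp a).symm (fav mp σ x) = σ a := by
          rw [← hfav]; exact (mp a).symm_apply_apply _
        have h2 : (σ a : ℕ) ≤ ((mp a).symm (ν a) : ℕ) := hM ν hν a
        have hne : ν a ≠ fav mp σ x := by
          intro hcon
          have : ν a = ν x := by rw [hcon, hνx]; rfl
          exact hab (ν.injective this)
        have : (mp a).symm (ν a) ≠ (mp a).symm (fav mp σ x) := fun hc =>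
          hne ((mp a).symm.injective hc)
        show (mp a).symm (fav mp σ x) < (mp a).symm (ν a)
        rw [h1]
        rw [h1] at this
        refine lt_of_le_of_ne ?_ (Ne.symm this)
        rw [Fin.le_def]
        exact h2
      · show SPref (wp (fav mp σ x)) a (ν.symm (fav mp σ x))
        have : ν.symm (fav mp σ x) = x := by
          rw [show fav mp σ x = ν x from hνx.symm ▸ rfl]
          · exact ν.symm_apply_apply x
        rw [this]; exact hpref
  · have := hM ν hν x
    simpa [Function.update_of_ne hxb] using this

lemma invI_run (t : ℕ) : InvI mp wp (run mp wp hn t) := by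
  induction t with
  | zero => exact invI_init mp wp hn
  | succ t ih =>
    rcases run_succ_cases mp wp hn t with h | h
    · rwa [h]
    · exact invI_step mp wp ih h

lemma invM_run (t : ℕ) : InvM mp wp (run mp wp hn t) := by
  induction t with
  | zero => intro ν hν a; simp [run]
  | succ t ih =>
    rcases run_succ_cases mp wp hn t with h | h
    · rwa [h]
    · exact invM_step mp wp ih h

/-- Counting argument: a man who is beaten at his current woman has pointer < n - 1. -/
lemma pointer_bound {σ : Fin n → Fin n} (hI : InvI mp wp σ) {a b : Fin n}
    (hab : a ≠ b) (hfav : fav mp σ a = fav mp σ b) :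
    ((σ b : ℕ) + 1) < n := by
  classical
  have hn2 : 2 ≤ n := by
    have : 1 < Fintype.card (Fin n) := Fintype.one_lt_card_iff_nontrivial.mpr ⟨⟨a, b, hab⟩⟩
    simp at this; omega
  set g : Fin n → Fin n := fun k => if hk : k < σ b then (hI b k hk).choose else a with hg
  have hgspec : ∀ k : Fin n, (hk : k < σ b) →
      fav mp σ (g k) = mp b k ∧ SPref (wp (mp b k)) (g k) b := by
    intro k hk
    simp only [hg, dif_pos hk]
    exact (hI b k hk).choose_spec
  set K : Finset (Fin n) := Finset.univ.filter (fun k : Fin n => k < σ b) with hK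
  have hKcard : K.card = (σ b : ℕ) := by
    have : K = Finset.Iio (σ b) := by
      ext k; simp [hK, Finset.mem_Iio]
    rw [this, Fin.card_Iio]
  have hgne : ∀ k ∈ K, g k ≠ a ∧ g k ≠ b := by
    intro k hk
    have hk' : k < σ b := by simpa [hK] using hk
    obtain ⟨h1, _⟩ := hgspec k hk'
    have hkne : mp b k ≠ fav mp σ b := by
      intro hc
      have := (mp b).injective hc
      exact absurd this (Fin.ne_of_lt hk')
    constructor
    · intro hc; rw [hc] at h1; rw [hfav] at h1; exact hkne h1.symm
    · intro hc; rw [hc] at h1; exact hkne h1.symm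
  have hinjOn : Set.InjOn g K := by
    intro k1 hk1 k2 hk2 hgk
    have hk1' : k1 < σ b := by simpa [hK] using hk1
    have hk2' : k2 < σ b := by simpa [hK] using hk2
    have e1 := (hgspec k1 hk1').1
    have e2 := (hgspec k2 hk2').1
    rw [hgk] at e1
    exact (mp b).injective (e1.symm.trans e2)
  have hsub : K.image g ⊆ Finset.univ \ {a, b} := by
    intro c hc
    obtain ⟨k, hk, rfl⟩ := Finset.mem_image.mp hc
    obtain ⟨h1, h2⟩ := hgne k hk
    simp [h1, h2]
  have hcard1 : (K.image g).card = (σ b : ℕ) := by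
    rw [Finset.card_image_of_injOn hinjOn, hKcard]
  have hcard2 : (Finset.univ \ ({a, b} : Finset (Fin n))).card = n - 2 := by
    rw [Finset.card_sdiff_of_subset (Finset.subset_univ _)]
    simp [Finset.card_pair hab]
  have := Finset.card_le_card hsub
  rw [hcard1, hcard2] at this
  omega

lemma progress {σ : Fin n → Fin n} (hI : InvI mp wp σ) (hstuck : ¬ ∃ σ', GStep mp wp σ σ') :
    Function.Injective (fav mp σ) := by
  intro a b hfab
  by_contra hab
  -- one of a,b is preferred by the common woman
  have hr : (wp (fav mp σ b)).symm a ≠ (wp (fav mp σ b)).symm b := fun h => hab ((wp _).symm.injective h)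
  have key : ∀ x y : Fin n, x ≠ y → fav mp σ x = fav mp σ y →
      SPref (wp (fav mp σ y)) x y → False := by
    intro x y hxy hf hp
    exact hstuck ⟨_, x, y, pointer_bound mp wp hI hxy hf, hxy, hf, hp, rfl⟩
  rcases lt_or_gt_of_ne hr with h | h
  · exact key a b hab hfab h
  · have : fav mp σ b = fav mp σ a := hfab.symm
    exact key b a (Ne.symm hab) this (by show SPref (wp (fav mp σ a)) b a; rw [hfab]; exact h)

lemma step_coord (t : ℕ) (x : Fin n) :
    run mp wp hn (t+1) x = run mp wp hn t x ∨
    (((run mp wp hn (t+1) x : ℕ) = (run mp wp hn t x : ℕ) + 1) ∧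
      (∀ y, y ≠ x → run mp wp hn (t+1) y = run mp wp hn t y) ∧
      ∃ c, c ≠ x ∧ fav mp (run mp wp hn t) c = fav mp (run mp wp hn t) x ∧
        SPref (wp (fav mp (run mp wp hn t) x)) c x) := by
  rcases run_succ_cases mp wp hn t with h | h
  · left; rw [h]
  · obtain ⟨a, b, hb, hab, hfav, hpref, hupd⟩ := h
    by_cases hxb : x = b
    · subst hxb
      right
      refine ⟨?_, ?_, a, hab, hfav, hpref⟩
      · rw [hupd, Function.update_self]
      · intro y hy; rw [hupd, Function.update_of_ne hy]
    · left; rw [hupd, Function.update_of_ne hxb]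

lemma run_mono_succ (t : ℕ) (x : Fin n) :
    (run mp wp hn t x : ℕ) ≤ (run mp wp hn (t+1) x : ℕ) := by
  rcases step_coord mp wp hn t x with h | h
  · rw [h]
  · rw [h.1]; omega

lemma run_succ_le (t : ℕ) (x : Fin n) :
    (run mp wp hn (t+1) x : ℕ) ≤ (run mp wp hn t x : ℕ) + 1 := by
  rcases step_coord mp wp hn t x with h | h
  · rw [h]; omega
  · rw [h.1]

lemma run_mono {t t' : ℕ} (h : t ≤ t') (x : Fin n) :
    (run mp wp hn t x : ℕ) ≤ (run mp wp hn t' x : ℕ) := by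
  induction t', h using Nat.le_induction with
  | base => exact le_refl _
  | succ t'' h ih => exact le_trans ih (run_mono_succ mp wp hn t'' x)

lemma exists_stuck : ∃ T, ¬ ∃ σ', GStep mp wp (run mp wp hn T) σ' := by
  by_contra hcon
  push_neg at hcon
  have hstep : ∀ t, (∑ x, (run mp wp hn (t+1) x : ℕ)) = (∑ x, (run mp wp hn t x : ℕ)) + 1 := by
    intro t
    have h := run_succ_cases mp wp hn t
    rcases h with h | h
    · exfalso
      obtain ⟨σ', hσ'⟩ := hcon t
      obtain ⟨a, b, hb, hab, hfav, hpref, hupd⟩ := hσ'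
      have h1 : run mp wp hn (t+1) b = run mp wp hn t b := by rw [h]
      have h2 : ∃ σ'', GStep mp wp (run mp wp hn t) σ'' := hcon t
      rw [run] at h
      rw [dif_pos h2] at h
      have := h2.choose_spec
      rw [h] at this
      obtain ⟨a', b', hb', hab', hfav', hpref', hupd'⟩ := this
      have : run mp wp hn t b' = Function.update (run mp wp hn t) b' ⟨_, hb'⟩ b' := by
        conv_lhs => rw [hupd']
      rw [Function.update_self] at this
      have : (run mp wp hn t b' : ℕ) = (run mp wp hn t b' : ℕ) + 1 := congrArg Fin.val this
      omega
    · obtain ⟨a, b, hb, hab, hfav, hpref, hupd⟩ := h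
      rw [hupd]
      have : (fun x => ((Function.update (run mp wp hn t) b ⟨(run mp wp hn t b : ℕ) + 1, hb⟩ x : Fin n) : ℕ))
          = Function.update (fun x => (run mp wp hn t x : ℕ)) b ((run mp wp hn t b : ℕ) + 1) := by
        funext x
        by_cases hx : x = b
        · subst hx; simp
        · simp [Function.update_of_ne hx]
      rw [this, Finset.sum_update_of_mem (Finset.mem_univ b)]
      rw [Finset.sum_eq_sum_sdiff_singleton_add (Finset.mem_univ b) (fun x => (run mp wp hn t x : ℕ))]
      omega
  have hsum : ∀ t, (∑ x, (run mp wp hn t x : ℕ)) = t := by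
    intro t
    induction t with
    | zero => simp [run]
    | succ t ih => rw [hstep t, ih]
  have hbound : (∑ x, (run mp wp hn (n*(n-1)+1) x : ℕ)) ≤ n * (n-1) := by
    calc (∑ x, (run mp wp hn (n*(n-1)+1) x : ℕ)) ≤ ∑ _x : Fin n, (n-1) := by
          refine Finset.sum_le_sum ?_
          intro i _
          have := (run mp wp hn (n*(n-1)+1) i).isLt
          omega
      _ = n * (n-1) := by simp [Finset.sum_const, Finset.card_univ, mul_comm]
  rw [hsum] at hbound
  omega

/-- The terminal time of the run. -/
noncomputable def Tstop : ℕ := (exists_stuck mp wp hn).choose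

lemma stuck : ¬ ∃ σ', GStep mp wp (run mp wp hn (Tstop mp wp hn)) σ' :=
  (exists_stuck mp wp hn).choose_spec

/-- The terminal pointer state. -/
noncomputable def σT : Fin n → Fin n := run mp wp hn (Tstop mp wp hn)

lemma GS_bij : Function.Bijective (fav mp (σT mp wp hn)) :=
  Finite.injective_iff_bijective.mp
    (progress mp wp (invI_run mp wp hn _) (stuck mp wp hn))

/-- The Gale–Shapley (man-optimal stable) matching. -/
noncomputable def GSmatch : Matching n := Equiv.ofBijective _ (GS_bij mp wp hn)

lemma GSmatch_apply (a : Fin n) : GSmatch mp wp hn a = fav mp (σT mp wp hn) a := rfl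

lemma GS_stable : IsStable mp wp (GSmatch mp wp hn) := by
  rintro a w ⟨h1, h2⟩
  have h1' : (mp a).symm w < σT mp wp hn a := by
    have : (mp a).symm (GSmatch mp wp hn a) = σT mp wp hn a := by
      rw [GSmatch_apply]; exact (mp a).symm_apply_apply _
    rw [← this]; exact h1
  obtain ⟨c, hc1, hc2⟩ := invI_run mp wp hn (Tstop mp wp hn) a ((mp a).symm w) h1'
  rw [Equiv.apply_symm_apply] at hc1 hc2
  have hcw : GSmatch mp wp hn c = w := hc1
  have : (GSmatch mp wp hn).symm w = c := by rw [← hcw, Equiv.symm_apply_apply]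
  rw [this] at h2
  exact spref_asymm hc2 h2

lemma GS_opt : ∀ ν : Matching n, IsStable mp wp ν → ∀ a,
    WPref (mp a) (GSmatch mp wp hn a) (ν a) := by
  intro ν hν a
  have := invM_run mp wp hn (Tstop mp wp hn) ν hν a
  show (mp a).symm (GSmatch mp wp hn a) ≤ (mp a).symm (ν a)
  have h1 : (mp a).symm (GSmatch mp wp hn a) = σT mp wp hn a := by
    rw [GSmatch_apply]; exact (mp a).symm_apply_apply _
  rw [h1, Fin.le_def]
  exact this

lemma run_stable {t : ℕ} (h : Tstop mp wp hn ≤ t) :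
    run mp wp hn t = run mp wp hn (Tstop mp wp hn) := by
  induction t, h using Nat.le_induction with
  | base => rfl
  | succ t'' h ih =>
    rw [run, ih, dif_neg (stuck mp wp hn)]

lemma reach {x : Fin n} {r : ℕ} (hr : r ≤ (σT mp wp hn x : ℕ)) :
    ∃ t ≤ Tstop mp wp hn, (run mp wp hn t x : ℕ) = r := by
  have hex : ∃ t, r ≤ (run mp wp hn t x : ℕ) := ⟨Tstop mp wp hn, hr⟩
  set t0 := Nat.find hex with ht0
  have hspec : r ≤ (run mp wp hn t0 x : ℕ) := Nat.find_spec hex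
  have hle : t0 ≤ Tstop mp wp hn := Nat.find_min' hex hr
  refine ⟨t0, hle, ?_⟩
  match ht0' : t0, hspec with
  | 0, hspec =>
    have : (run mp wp hn 0 x : ℕ) = 0 := rfl
    omega
  | (s+1), hspec =>
    have hmin : ¬ r ≤ (run mp wp hn s x : ℕ) := Nat.find_min hex (by omega)
    have := run_succ_le mp wp hn s x
    omega

lemma reject_extract {x : Fin n} {t r : ℕ} (ht : (run mp wp hn t x : ℕ) = r)
    (hT : r < (σT mp wp hn x : ℕ)) :
    ∃ s, t ≤ s ∧ (run mp wp hn s x : ℕ) = r ∧ (run mp wp hn (s+1) x : ℕ) = r + 1 ∧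
      (∀ y, y ≠ x → run mp wp hn (s+1) y = run mp wp hn s y) ∧
      ∃ c, c ≠ x ∧ fav mp (run mp wp hn s) c = fav mp (run mp wp hn s) x ∧
        SPref (wp (fav mp (run mp wp hn s) x)) c x := by
  have hex : ∃ s, r < (run mp wp hn (s+1) x : ℕ) := by
    refine ⟨Tstop mp wp hn, ?_⟩
    have := run_mono mp wp hn (Nat.le_succ (Tstop mp wp hn)) x
    simp only [Nat.succ_eq_add_one] at this
    have h2 : (run mp wp hn (Tstop mp wp hn) x : ℕ) = (σT mp wp hn x : ℕ) := rfl
    omega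
  set s0 := Nat.find hex with hs0
  have hspec : r < (run mp wp hn (s0+1) x : ℕ) := Nat.find_spec hex
  have hts : t ≤ s0 := by
    by_contra hcon
    push_neg at hcon
    have h1 : ¬ r < (run mp wp hn (s0+1) x : ℕ) := by
      have := run_mono mp wp hn (show s0+1 ≤ t by omega) x
      omega
    exact h1 hspec
  have hval : (run mp wp hn s0 x : ℕ) = r := by
    have hge : r ≤ (run mp wp hn s0 x : ℕ) := by
      have := run_mono mp wp hn hts x; omega
    match hs0' : s0, hspec, hts, hge with
    | 0, _, hts, hge =>
      have h0 : (run mp wp hn 0 x : ℕ) = 0 := rfl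
      have : t = 0 := by omega
      subst this; omega
    | (s+1), _, _, hge =>
      have hmin : ¬ r < (run mp wp hn (s+1) x : ℕ) := Nat.find_min hex (by omega)
      omega
  rcases step_coord mp wp hn s0 x with h | h
  · exfalso
    have : (run mp wp hn (s0+1) x : ℕ) = (run mp wp hn s0 x : ℕ) := congrArg Fin.val h
    omega
  · exact ⟨s0, hts, hval, by omega, h.2.1, h.2.2⟩

/-- First time that the GS-partner of `w` points at `w`. -/
lemma exists_point (w : Fin n) :
    ∃ t, fav mp (run mp wp hn t) ((GSmatch mp wp hn).symm w) = w :=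
  ⟨Tstop mp wp hn, (GSmatch mp wp hn).apply_symm_apply w⟩

noncomputable def ptime (w : Fin n) : ℕ := Nat.find (exists_point mp wp hn w)

lemma ptime_le (w : Fin n) : ptime mp wp hn w ≤ Tstop mp wp hn :=
  Nat.find_min' _ ((GSmatch mp wp hn).apply_symm_apply w)

lemma ptime_spec (w : Fin n) :
    fav mp (run mp wp hn (ptime mp wp hn w)) ((GSmatch mp wp hn).symm w) = w :=
  Nat.find_spec (exists_point mp wp hn w)

lemma ptime_min {w : Fin n} {t : ℕ} (h : t < ptime mp wp hn w) :
    fav mp (run mp wp hn t) ((GSmatch mp wp hn).symm w) ≠ w :=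
  Nat.find_min (exists_point mp wp hn w) h

lemma fav_eq_iff_val {t : ℕ} {x w : Fin n} :
    fav mp (run mp wp hn t) x = w ↔ (run mp wp hn t x : ℕ) = ((mp x).symm w : ℕ) := by
  constructor
  · intro h
    have : (mp x).symm w = run mp wp hn t x := by rw [← h]; exact (mp x).symm_apply_apply _
    rw [this]
  · intro h
    have : run mp wp hn t x = (mp x).symm w := Fin.ext h
    rw [fav, this, Equiv.apply_symm_apply]

lemma sigmaT_val (x : Fin n) :
    (σT mp wp hn x : ℕ) = ((mp x).symm (GSmatch mp wp hn x) : ℕ) := by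
  have : (mp x).symm (GSmatch mp wp hn x) = σT mp wp hn x := by
    rw [GSmatch_apply]; exact (mp x).symm_apply_apply _
  rw [this]

theorem blocking_lemma (ν : Matching n)
    (hne : ∃ a, SPref (mp a) (ν a) (GSmatch mp wp hn a)) :
    ∃ x w, ¬ SPref (mp x) (ν x) (GSmatch mp wp hn x) ∧ Blocks mp wp ν x w := by
  classical
  set μ := GSmatch mp wp hn with hμ
  set Bf : Finset (Fin n) := Finset.univ.filter (fun a => SPref (mp a) (ν a) (μ a)) with hBf
  have hBmem : ∀ a, a ∈ Bf ↔ SPref (mp a) (ν a) (μ a) := by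
    intro a; simp [hBf]
  by_cases hcase : Bf.image ν ⊆ Bf.image μ
  · -- case (ii): the temporal argument
    have himg : Bf.image ν = Bf.image μ := by
      refine Finset.eq_of_subset_of_card_le hcase ?_
      rw [Finset.card_image_of_injective _ μ.injective,
        Finset.card_image_of_injective _ ν.injective]
    obtain ⟨a0, ha0⟩ := hne
    have hW : (Bf.image μ).Nonempty := ⟨μ a0, Finset.mem_image_of_mem _ ((hBmem a0).mpr ha0)⟩
    obtain ⟨wstar, hwW, hmax⟩ := Finset.exists_max_image (Bf.image μ) (ptime mp wp hn) hW
    set astar := μ.symm wstar with hastar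
    set a2 := ν.symm wstar with ha2
    have ha2B : a2 ∈ Bf := by
      have : wstar ∈ Bf.image ν := by rw [himg]; exact hwW
      obtain ⟨a, haB, hav⟩ := Finset.mem_image.mp this
      have : a2 = a := by rw [ha2, ← hav, Equiv.symm_apply_apply]
      rwa [this]
    have ha2S : SPref (mp a2) (ν a2) (μ a2) := (hBmem a2).mp ha2B
    have hνa2 : ν a2 = wstar := ν.apply_symm_apply wstar
    have ha2ne : a2 ≠ astar := by
      intro hcon
      have h1 : ν a2 = μ a2 := by
        rw [hνa2, hcon]
        exact (μ.apply_symm_apply wstar).symm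
      rw [h1] at ha2S
      exact spref_irrefl _ _ ha2S
    -- a2 points at wstar some time, rejected
    have hrank : ((mp a2).symm wstar : ℕ) < ((mp a2).symm (μ a2) : ℕ) := by
      have h1 := ha2S
      unfold SPref at h1
      rw [Fin.lt_def] at h1
      rw [← hνa2]
      exact h1
    obtain ⟨t1, ht1T, ht1⟩ := reach mp wp hn (x := a2) (r := ((mp a2).symm wstar : ℕ))
      (by rw [sigmaT_val, ← hμ]; omega)
    obtain ⟨s0, hts0, hs0v, hs0v', hs0other, c0, hc0ne, hc0fav, hc0pref⟩ :=
      reject_extract mp wp hn (x := a2) ht1 (by rw [sigmaT_val, ← hμ]; omega)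
    have hfavs0 : fav mp (run mp wp hn s0) a2 = wstar := (fav_eq_iff_val mp wp hn).mpr hs0v
    -- s0 < ptime wstar
    have hs0lt : s0 < ptime mp wp hn wstar := by
      by_contra hcon
      push_neg at hcon
      have hw2 : μ a2 ∈ Bf.image μ := Finset.mem_image_of_mem _ ha2B
      have hp2 : ptime mp wp hn (μ a2) ≤ ptime mp wp hn wstar := hmax _ hw2
      have hsymm : μ.symm (μ a2) = a2 := μ.symm_apply_apply a2
      have hfv : fav mp (run mp wp hn (ptime mp wp hn (μ a2))) a2 = μ a2 := by
        have := ptime_spec mp wp hn (μ a2); rwa [hsymm] at this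
      have hv : (run mp wp hn (ptime mp wp hn (μ a2)) a2 : ℕ) = ((mp a2).symm (μ a2) : ℕ) :=
        (fav_eq_iff_val mp wp hn).mp hfv
      have hmono := run_mono mp wp hn (show ptime mp wp hn (μ a2) ≤ s0 by omega) a2
      omega
    -- chain invariant
    have chain : ∀ t, s0 + 1 ≤ t → t ≤ ptime mp wp hn wstar →
        ∃ x, x ≠ astar ∧ fav mp (run mp wp hn t) x = wstar ∧ SPref (wp wstar) x a2 := by
      intro t h1 h2
      induction t, h1 using Nat.le_induction with
      | base =>
        refine ⟨c0, ?_, ?_, ?_⟩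
        · intro hcon
          exact ptime_min mp wp hn (show s0 < ptime mp wp hn wstar from hs0lt)
            (by rw [← hastar, ← hcon]; rw [hfavs0] at hc0fav; exact hc0fav)
        · have h3 : fav mp (run mp wp hn (s0+1)) c0 = fav mp (run mp wp hn s0) c0 := by
            unfold fav; rw [hs0other c0 hc0ne]
          rw [h3, hc0fav, hfavs0]
        · rw [hfavs0] at hc0pref; exact hc0pref
      | succ t ht ih =>
        obtain ⟨x, hxne, hxfav, hxpref⟩ := ih (by omega)
        rcases step_coord mp wp hn t x with h | h
        · refine ⟨x, hxne, ?_, hxpref⟩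
          have h3 : fav mp (run mp wp hn (t+1)) x = fav mp (run mp wp hn t) x := by
            unfold fav; rw [h]
          rw [h3, hxfav]
        · obtain ⟨hv, hother, c, hcne, hcfav, hcpref⟩ := h
          refine ⟨c, ?_, ?_, ?_⟩
          · intro hcon
            exact ptime_min mp wp hn (show t < ptime mp wp hn wstar by omega)
              (by rw [← hastar, ← hcon]; rw [hxfav] at hcfav; exact hcfav)
          · have h3 : fav mp (run mp wp hn (t+1)) c = fav mp (run mp wp hn t) c := by
              unfold fav; rw [hother c hcne]
            rw [h3, hcfav, hxfav]
          · rw [hxfav] at hcpref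
            exact spref_trans hcpref hxpref
      
    obtain ⟨xs, hxsne, hxsfav, hxspref⟩ := chain (ptime mp wp hn wstar) (by omega) le_rfl
    -- xs ∉ B
    have hxsval : (run mp wp hn (ptime mp wp hn wstar) xs : ℕ) = ((mp xs).symm wstar : ℕ) :=
      (fav_eq_iff_val mp wp hn).mp hxsfav
    have hxslt : ((mp xs).symm wstar : ℕ) < ((mp xs).symm (μ xs) : ℕ) := by
      have hmono := run_mono mp wp hn (ptime_le mp wp hn wstar) xs
      have hσ := sigmaT_val mp wp hn xs
      rw [← hμ] at hσ
      have hne2 : ((mp xs).symm wstar : ℕ) ≠ ((mp xs).symm (μ xs) : ℕ) := by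
        intro hcon
        have : wstar = μ xs := (mp xs).symm.injective (Fin.ext hcon)
        exact hxsne (by rw [hastar, this, Equiv.symm_apply_apply])
      have : (run mp wp hn (Tstop mp wp hn) xs : ℕ) = (σT mp wp hn xs : ℕ) := rfl
      omega
    have hxsnotB : ¬ SPref (mp xs) (ν xs) (μ xs) := by
      intro hcon
      have hw2 : μ xs ∈ Bf.image μ := Finset.mem_image_of_mem _ ((hBmem xs).mpr hcon)
      have hp2 : ptime mp wp hn (μ xs) ≤ ptime mp wp hn wstar := hmax _ hw2
      have hsymm : μ.symm (μ xs) = xs := μ.symm_apply_apply xs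
      have hfv : fav mp (run mp wp hn (ptime mp wp hn (μ xs))) xs = μ xs := by
        have := ptime_spec mp wp hn (μ xs); rwa [hsymm] at this
      have hv : (run mp wp hn (ptime mp wp hn (μ xs)) xs : ℕ) = ((mp xs).symm (μ xs) : ℕ) :=
        (fav_eq_iff_val mp wp hn).mp hfv
      have hmono := run_mono mp wp hn hp2 xs
      omega
    refine ⟨xs, wstar, hxsnotB, ?_, ?_⟩
    · -- man side: SPref (mp xs) wstar (ν xs)
      show SPref (mp xs) wstar (ν xs)
      have hBle : ((mp xs).symm (μ xs) : ℕ) ≤ ((mp xs).symm (ν xs) : ℕ) := by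
        have := hxsnotB
        unfold SPref at this
        rw [Fin.lt_def] at this
        omega
      show (mp xs).symm wstar < (mp xs).symm (ν xs)
      rw [Fin.lt_def]
      omega
    · rw [← ha2]; exact hxspref
  · -- case (i): purely combinatorial
    rw [Finset.not_subset] at hcase
    obtain ⟨b, hbν, hbμ⟩ := hcase
    obtain ⟨a, haB, hab⟩ := Finset.mem_image.mp hbν
    have haS : SPref (mp a) (ν a) (μ a) := (hBmem a).mp haB
    set a' := μ.symm b with ha'
    have ha'notB : ¬ SPref (mp a') (ν a') (μ a') := by
      intro hcon
      exact hbμ (Finset.mem_image.mpr ⟨a', (hBmem a').mpr hcon, μ.apply_symm_apply b⟩)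
    have hμa' : μ a' = b := μ.apply_symm_apply b
    have haa' : a ≠ a' := by
      intro hcon
      rw [← hcon] at hμa'
      rw [hμa', ← hab] at haS
      exact spref_irrefl _ _ haS
    refine ⟨a', b, ha'notB, ?_, ?_⟩
    · -- SPref (mp a') b (ν a')
      show SPref (mp a') b (ν a')
      refine spref_of_ne_of_not ?_ ?_
      · intro hcon
        exact haa' (ν.injective (by rw [hab, ← hcon]))
      · intro hcon
        rw [← hμa'] at hcon
        exact ha'notB hcon
    · -- SPref (wp b) a' (ν.symm b)
      have hsymm : ν.symm b = a := by rw [← hab, Equiv.symm_apply_apply]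
      rw [hsymm]
      refine spref_of_ne_of_not (Ne.symm haa') ?_
      intro hcon
      -- (a, b) would block μ
      refine GS_stable mp wp hn a b ⟨?_, ?_⟩
      · show SPref (mp a) b (GSmatch mp wp hn a)
        rw [← hab]; exact haS
      · show SPref (wp b) a ((GSmatch mp wp hn).symm b)
        rw [show (GSmatch mp wp hn).symm b = a' from rfl]
        exact hcon

end GS



section DAFacts

variable (mp wp : Profile n)

lemma DA_spec (hn : 0 < n) : IsStable mp wp (DA mp wp) ∧
    ∀ μ' : Matching n, IsStable mp wp μ' → ∀ a, WPref (mp a) (DA mp wp a) (μ' a) := by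
  have hex : ∃ μ : Matching n, IsStable mp wp μ ∧
      ∀ μ' : Matching n, IsStable mp wp μ' → ∀ a, WPref (mp a) (μ a) (μ' a) :=
    ⟨GSmatch mp wp hn, GS_stable mp wp hn, GS_opt mp wp hn⟩
  exact Classical.epsilon_spec hex

lemma DA_eq_GS (hn : 0 < n) : DA mp wp = GSmatch mp wp hn := by
  apply Equiv.ext
  intro a
  exact eq_of_wpref_wpref ((DA_spec mp wp hn).2 (GSmatch mp wp hn) (GS_stable mp wp hn) a)
    (GS_opt mp wp hn (DA mp wp) (DA_spec mp wp hn).1 a)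

lemma DA_blocking (hn : 0 < n) (ν : Matching n) (hne : ∃ a, SPref (mp a) (ν a) (DA mp wp a)) :
    ∃ x w, ¬ SPref (mp x) (ν x) (DA mp wp x) ∧ Blocks mp wp ν x w := by
  simp only [DA_eq_GS mp wp hn] at hne ⊢
  exact blocking_lemma mp wp hn ν hne

end DAFacts

end PushUpAux

open PushUpAux in
theorem pushup_women_better_men_worse' {n : ℕ} (mp wp : Profile n) (m : Fin n)
    (X : Set (Fin n)) (q : Pref n)
    (hX : X ⊆ {w | SPref (mp m) (DA mp wp m) w})
    (hq : IsPushUp (mp m) (DA mp wp m) X q)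
    (hnoregret : WPref (mp m) (DA (Function.update mp m q) wp m) (DA mp wp m)) :
    (∀ w, WPref (wp w) ((DA (Function.update mp m q) wp).symm w) ((DA mp wp).symm w)) ∧
    (∀ m', WPref (mp m') (DA mp wp m') (DA (Function.update mp m q) wp m')) := by
  have hn : 0 < n := m.pos
  set p' := Function.update mp m q with hp'
  set μ := DA mp wp with hμdef
  set μ' := DA p' wp with hμ'def
  obtain ⟨hμstab, hμopt⟩ := DA_spec mp wp hn
  obtain ⟨hμ'stab, hμ'opt⟩ := DA_spec p' wp hn
  -- strategy-proofness via the blocking lemma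
  have hDF : ¬ SPref (mp m) (μ' m) (μ m) := by
    intro hcon
    obtain ⟨x, w, hxnotB, hb1, hb2⟩ := DA_blocking mp wp hn μ' ⟨m, hcon⟩
    have hxm : x ≠ m := fun h => hxnotB (h ▸ hcon)
    refine hμ'stab x w ⟨?_, hb2⟩
    show SPref (p' x) w (μ' x)
    rw [hp', Function.update_of_ne hxm]
    exact hb1
  have heq : μ' m = μ m :=
    eq_of_wpref_wpref hnoregret (wpref_of_not_spref hDF)
  -- μ' is stable with respect to the true profiles
  have hstab : IsStable mp wp μ' := by
    rintro a w ⟨hb1, hb2⟩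
    by_cases ham : a = m
    · subst ham
      refine hμ'stab a w ⟨?_, hb2⟩
      show SPref (p' a) w (μ' a)
      rw [hp', Function.update_self]
      rw [heq] at hb1
      have := (hq w).mpr (Or.inl hb1)
      rw [heq]
      exact this
    · refine hμ'stab a w ⟨?_, hb2⟩
      show SPref (p' a) w (μ' a)
      rw [hp', Function.update_of_ne ham]
      exact hb1
  refine ⟨?_, fun m' => hμopt μ' hstab m'⟩
  intro w
  by_contra hcon
  have hs : SPref (wp w) (μ.symm w) (μ'.symm w) := lt_of_not_ge hcon
  have hne' : μ.symm w ≠ μ'.symm w := spref_ne hs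
  have h1 : μ (μ.symm w) = w := μ.apply_symm_apply w
  have h2 : μ' (μ.symm w) ≠ w := by
    intro h
    apply hne'
    have h5 := congrArg μ'.symm h
    rw [Equiv.symm_apply_apply] at h5
    rw [← h5]
  have h3 : WPref (mp (μ.symm w)) (μ (μ.symm w)) (μ' (μ.symm w)) := hμopt μ' hstab (μ.symm w)
  have h4 : SPref (mp (μ.symm w)) w (μ' (μ.symm w)) := by
    rw [h1] at h3
    refine lt_of_le_of_ne h3 ?_
    intro hcc
    exact h2 ((mp (μ.symm w)).symm.injective hcc).symm
  exact hstab (μ.symm w) w ⟨h4, hs⟩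


theorem pushup_women_better_men_worse {n : ℕ} (mp wp : Profile n) (m : Fin n)
    (X : Set (Fin n)) (q : Pref n)
    (hX : X ⊆ {w | SPref (mp m) (DA mp wp m) w})
    (hq : IsPushUp (mp m) (DA mp wp m) X q)
    (hnoregret : WPref (mp m) (DA (Function.update mp m q) wp m) (DA mp wp m)) :
    (∀ w, WPref (wp w) ((DA (Function.update mp m q) wp).symm w) ((DA mp wp).symm w)) ∧
    (∀ m', WPref (mp m') (DA mp wp m') (DA (Function.update mp m q) wp m')) :=
  pushup_women_better_men_worse' mp wp m X q hX hq hnoregret
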